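/- Let u_∅, u_1, u_2, u_{12} be positive real numbers. Then the diagonal 2×2 matrix Θ̂ with θ̂_{11} = (u_1 + u_{12})/(u_∅ + u_2), θ̂_{22} = (u_2 + u_{12})/(u_∅ + u_1) and θ̂_{12} = 0 is a critical point of L_u: the partial derivatives of L_u with respect to θ_{11}, θ_{12}, θ_{22} all vanish at Θ̂. -/

import Mathlib

/-- The log-likelihood function of the 2×2 DPP model in the entries
`(θ₁₁, θ₁₂, θ₂₂)` of a symmetric matrix, for data `u = (u∅, u₁, u₂, u₁₂)`. -/
noncomputable def L2 (u0 u1 u2 u12 : ℝ) (t11 t12 t22 : ℝ) : ℝ :=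
  u1 * Real.log t11 + u2 * Real.log t22 + u12 * Real.log (t11 * t22 - t12 ^ 2)
    - (u0 + u1 + u2 + u12) * Real.log (t11 * t22 - t12 ^ 2 + t11 + t22 + 1)

/-- For positive data, the diagonal matrix with `θ̂₁₁ = (u₁+u₁₂)/(u∅+u₂)`,
`θ̂₂₂ = (u₂+u₁₂)/(u∅+u₁)` and `θ̂₁₂ = 0` is a critical point of the
log-likelihood `L_u`. -/
theorem twoByTwo_diagonal_critical (u0 u1 u2 u12 : ℝ)
    (h0 : 0 < u0) (h1 : 0 < u1) (h2 : 0 < u2) (h12 : 0 < u12)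
    (t11 t12 t22 : ℝ)
    (ht11 : t11 = (u1 + u12) / (u0 + u2)) (ht12 : t12 = 0)
    (ht22 : t22 = (u2 + u12) / (u0 + u1)) :
    deriv (fun s => L2 u0 u1 u2 u12 s t12 t22) t11 = 0 ∧
      deriv (fun s => L2 u0 u1 u2 u12 t11 s t22) t12 = 0 ∧
      deriv (fun s => L2 u0 u1 u2 u12 t11 t12 s) t22 = 0 := by
  subst ht12
  have h02 : (0:ℝ) < u0 + u2 := by linarith
  have h01 : (0:ℝ) < u0 + u1 := by linarith
  have ha : 0 < t11 := by rw [ht11]; positivity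
  have hb : 0 < t22 := by rw [ht22]; positivity
  have hab : t11 * t22 - (0:ℝ) ^ 2 ≠ 0 := by
    have : 0 < t11 * t22 := mul_pos ha hb
    simpa using this.ne'
  have hd : t11 * t22 - (0:ℝ) ^ 2 + t11 + t22 + 1 ≠ 0 := by
    have : 0 < t11 * t22 - (0:ℝ) ^ 2 + t11 + t22 + 1 := by
      have : 0 < t11 * t22 := mul_pos ha hb
      nlinarith
    exact this.ne'
  set N := u0 + u1 + u2 + u12 with hN
  refine ⟨?_, ?_, ?_⟩
  · -- derivative in t11
    have H1 : HasDerivAt (fun s : ℝ => Real.log s) t11⁻¹ t11 :=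
      Real.hasDerivAt_log ha.ne'
    have H2 : HasDerivAt (fun s : ℝ => s * t22 - (0:ℝ) ^ 2) t22 t11 := by
      simpa only [one_mul, id_eq] using ((hasDerivAt_id t11).mul_const t22).sub_const ((0:ℝ) ^ 2)
    have H2' := H2.log hab
    have H3 : HasDerivAt (fun s : ℝ => s * t22 - (0:ℝ) ^ 2 + s + t22 + 1) (t22 + 1) t11 := by
      have := ((((hasDerivAt_id t11).mul_const t22).sub_const ((0:ℝ) ^ 2)).add
        (hasDerivAt_id t11)).add_const t22
      simpa using this.add_const 1
    have H3' := H3.log hd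
    have Hf : HasDerivAt (fun s => L2 u0 u1 u2 u12 s 0 t22)
        (u1 * t11⁻¹ + u12 * (t22 / (t11 * t22 - (0:ℝ) ^ 2))
          - N * ((t22 + 1) / (t11 * t22 - (0:ℝ) ^ 2 + t11 + t22 + 1))) t11 := by
      have := (((H1.const_mul u1).add_const (u2 * Real.log t22)).add
        (H2'.const_mul u12)).sub (H3'.const_mul N)
      simpa [L2, hN, add_assoc, Pi.add_def, Pi.sub_def] using this
    rw [Hf.deriv, ht11, ht22]
    have hs1 : u1 + u12 ≠ 0 := by positivity
    have hs2 : u2 + u12 ≠ 0 := by positivity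
    have hNne : N ≠ 0 := by rw [hN]; positivity
    have hD : (u1 + u12) / (u0 + u2) * ((u2 + u12) / (u0 + u1)) - (0:ℝ) ^ 2 + (u1 + u12) / (u0 + u2) + (u2 + u12) / (u0 + u1) + 1 = N ^ 2 / ((u0 + u2) * (u0 + u1)) := by
      rw [hN]; field_simp; ring
    rw [hD]
    field_simp
    rw [hN]
    ring
  · -- derivative in t12
    have H2 : HasDerivAt (fun s : ℝ => t11 * t22 - s ^ 2) (-(2 * 0)) (0:ℝ) := by
      have := ((hasDerivAt_pow 2 (0:ℝ)).const_sub (t11 * t22))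
      simpa using this
    have H2' := H2.log hab
    have H3 : HasDerivAt (fun s : ℝ => t11 * t22 - s ^ 2 + t11 + t22 + 1) (-(2 * 0)) (0:ℝ) := by
      have := (((hasDerivAt_pow 2 (0:ℝ)).const_sub (t11 * t22)).add_const t11).add_const t22
      simpa using this.add_const 1
    have H3' := H3.log hd
    have Hf : HasDerivAt (fun s => L2 u0 u1 u2 u12 t11 s t22) 0 (0:ℝ) := by
      have := (((hasDerivAt_const (0:ℝ) (u1 * Real.log t11)).add_const
        (u2 * Real.log t22)).add (H2'.const_mul u12)).sub (H3'.const_mul N)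
      simpa [L2, hN, Pi.add_def, Pi.sub_def] using this
    exact Hf.deriv
  · -- derivative in t22
    have H1 : HasDerivAt (fun s : ℝ => Real.log s) t22⁻¹ t22 :=
      Real.hasDerivAt_log hb.ne'
    have H2 : HasDerivAt (fun s : ℝ => t11 * s - (0:ℝ) ^ 2) t11 t22 := by
      simpa only [mul_one, id_eq] using ((hasDerivAt_id t22).const_mul t11).sub_const ((0:ℝ) ^ 2)
    have H2' := H2.log hab
    have H3 : HasDerivAt (fun s : ℝ => t11 * s - (0:ℝ) ^ 2 + t11 + s + 1) (t11 + 1) t22 := by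
      have := ((((hasDerivAt_id t22).const_mul t11).sub_const ((0:ℝ) ^ 2)).add_const t11).add
        (hasDerivAt_id t22)
      simpa using this.add_const 1
    have H3' := H3.log hd
    have Hf : HasDerivAt (fun s => L2 u0 u1 u2 u12 t11 0 s)
        (u2 * t22⁻¹ + u12 * (t11 / (t11 * t22 - (0:ℝ) ^ 2))
          - N * ((t11 + 1) / (t11 * t22 - (0:ℝ) ^ 2 + t11 + t22 + 1))) t22 := by
      have := (((hasDerivAt_const t22 (u1 * Real.log t11)).add (H1.const_mul u2)).add
        (H2'.const_mul u12)).sub (H3'.const_mul N)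
      simpa [L2, hN, add_assoc, Pi.add_def, Pi.sub_def] using this
    rw [Hf.deriv, ht11, ht22]
    have hs1 : u1 + u12 ≠ 0 := by positivity
    have hs2 : u2 + u12 ≠ 0 := by positivity
    have hNne : N ≠ 0 := by rw [hN]; positivity
    have hD : (u1 + u12) / (u0 + u2) * ((u2 + u12) / (u0 + u1)) - (0:ℝ) ^ 2 + (u1 + u12) / (u0 + u2) + (u2 + u12) / (u0 + u1) + 1 = N ^ 2 / ((u0 + u2) * (u0 + u1)) := by
      rw [hN]; field_simp; ring
    rw [hD]
    field_simp
    rw [hN]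
    ring
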